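/- Fix an integer N ≥ 1 and reals λ₁, λ₂, β with λ₂ < λ₁, β > 0 and β·(λ₁ − λ₂) > 1, and let m_E := √(1 − 1/(β(λ₁ − λ₂))). Let λ : Fin N → ℝ satisfy λ 0 = λ₁ and λ i ≤ λ₂ for all i ≠ 0. Then for every ε with 0 ≤ ε < m_E and every x ∈ EuclideanSpace ℝ (Fin N) with ‖x‖² = N and |x 0| ≤ ε·√N, one has (λ₁ − h(x)) − (1 − 1/N)·(1/β) > (λ₁ − λ₂)·(m_E² − ε²), where h(x) := (1/N)·∑ᵢ λ i · (x i)². -/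

import Mathlib

open Real

/-- Drift bound off the equator (Corollary 2.2): for the spiked spherical SK Hamiltonian,
below the easy threshold `mE`, the drift coefficient of the overlap exceeds
`(λ₁ - λ₂) * (mE² - ε²)`. -/
theorem drift_bound_off_equator
    (N : ℕ) (hN : 0 < N) (lam₁ lam₂ β : ℝ)
    (hlt : lam₂ < lam₁) (hβ : 0 < β) (hβlam : 1 < β * (lam₁ - lam₂))
    (mE : ℝ) (hmE : mE = Real.sqrt (1 - 1 / (β * (lam₁ - lam₂))))
    (lam : Fin N → ℝ) (hlam0 : lam ⟨0, hN⟩ = lam₁)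
    (hlam : ∀ i : Fin N, i ≠ ⟨0, hN⟩ → lam i ≤ lam₂)
    (ε : ℝ) (hε0 : 0 ≤ ε) (hε : ε < mE)
    (x : EuclideanSpace ℝ (Fin N)) (hx : ‖x‖ ^ 2 = N)
    (hx0 : |x ⟨0, hN⟩| ≤ ε * Real.sqrt N) :
    (lam₁ - (1 / N) * ∑ i, lam i * (x i) ^ 2) - (1 - 1 / N) * (1 / β)
      > (lam₁ - lam₂) * (mE ^ 2 - ε ^ 2) := by
  set i0 : Fin N := ⟨0, hN⟩
  have hNpos : (0 : ℝ) < N := Nat.cast_pos.mpr hN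
  have hD : (0 : ℝ) < lam₁ - lam₂ := by linarith
  have hβD : (0 : ℝ) < β * (lam₁ - lam₂) := by linarith
  have hmE2 : mE ^ 2 = 1 - 1 / (β * (lam₁ - lam₂)) := by
    rw [hmE, Real.sq_sqrt]
    have : 1 / (β * (lam₁ - lam₂)) ≤ 1 := by
      rw [div_le_one hβD]; linarith
    linarith
  -- sum of squares equals N
  have hsum : ∑ i, (x i) ^ 2 = (N : ℝ) := by
    have hnorm : ‖x‖ = Real.sqrt (∑ i, ‖x i‖ ^ 2) := EuclideanSpace.norm_eq x
    have h1 : ‖x‖ ^ 2 = ∑ i, ‖x i‖ ^ 2 := by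
      rw [hnorm, Real.sq_sqrt (Finset.sum_nonneg fun i _ => sq_nonneg _)]
    have h2 : ∑ i, ‖x i‖ ^ 2 = ∑ i, (x i) ^ 2 := by
      refine Finset.sum_congr rfl fun i _ => ?_
      rw [Real.norm_eq_abs, sq_abs]
    rw [← h2, ← h1, hx]
  -- x₀² ≤ ε² N
  have hx02 : (x i0) ^ 2 ≤ ε ^ 2 * N := by
    have h := mul_self_le_mul_self (abs_nonneg _) hx0
    calc (x i0) ^ 2 = |x i0| * |x i0| := by rw [← sq_abs]; ring
    _ ≤ (ε * Real.sqrt N) * (ε * Real.sqrt N) := h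
    _ = ε ^ 2 * (Real.sqrt N * Real.sqrt N) := by ring
    _ = ε ^ 2 * N := by rw [Real.mul_self_sqrt hNpos.le]
  have hx02' : (x i0) ^ 2 ≤ (N : ℝ) := by
    have : ∀ i ∈ Finset.univ, 0 ≤ (x i) ^ 2 := fun i _ => sq_nonneg _
    have := Finset.single_le_sum this (Finset.mem_univ i0)
    linarith [hsum]
  -- bound the sum
  have hbound : ∑ i, lam i * (x i) ^ 2
      ≤ lam₁ * (x i0) ^ 2 + lam₂ * ((N : ℝ) - (x i0) ^ 2) := by
    have hsplit : ∑ i, lam i * (x i) ^ 2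
        = lam i0 * (x i0) ^ 2 + ∑ i ∈ Finset.univ.erase i0, lam i * (x i) ^ 2 := by
      rw [← Finset.add_sum_erase _ _ (Finset.mem_univ i0)]
    have hrest : ∑ i ∈ Finset.univ.erase i0, lam i * (x i) ^ 2
        ≤ ∑ i ∈ Finset.univ.erase i0, lam₂ * (x i) ^ 2 := by
      refine Finset.sum_le_sum fun i hi => ?_
      exact mul_le_mul_of_nonneg_right (hlam i (Finset.ne_of_mem_erase hi)) (sq_nonneg _)
    have hrests : ∑ i ∈ Finset.univ.erase i0, (x i) ^ 2 = (N : ℝ) - (x i0) ^ 2 := by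
      have h4 : (x i0) ^ 2 + ∑ i ∈ Finset.univ.erase i0, (x i) ^ 2 = (N : ℝ) := by
        rw [Finset.add_sum_erase _ (fun i => (x i) ^ 2) (Finset.mem_univ i0)]; exact hsum
      linarith
    rw [hsplit, hlam0]
    have : ∑ i ∈ Finset.univ.erase i0, lam₂ * (x i) ^ 2
        = lam₂ * ((N : ℝ) - (x i0) ^ 2) := by
      rw [← Finset.mul_sum, hrests]
    linarith
  -- final algebra
  have hDmE : (lam₁ - lam₂) * mE ^ 2 = (lam₁ - lam₂) - 1 / β := by
    rw [hmE2]
    field_simp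
  have hhle : (1 / (N : ℝ)) * ∑ i, lam i * (x i) ^ 2
      ≤ lam₂ + (lam₁ - lam₂) * ε ^ 2 := by
    have h1 : (1 / (N : ℝ)) * ∑ i, lam i * (x i) ^ 2
        ≤ (1 / (N : ℝ)) * (lam₁ * (x i0) ^ 2 + lam₂ * ((N : ℝ) - (x i0) ^ 2)) :=
      mul_le_mul_of_nonneg_left hbound (by positivity)
    have h2 : lam₁ * (x i0) ^ 2 + lam₂ * ((N : ℝ) - (x i0) ^ 2)
        = lam₂ * N + (lam₁ - lam₂) * (x i0) ^ 2 := by ring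
    have h3 : (lam₁ - lam₂) * (x i0) ^ 2 ≤ (lam₁ - lam₂) * (ε ^ 2 * N) :=
      mul_le_mul_of_nonneg_left hx02 hD.le
    calc (1 / (N : ℝ)) * ∑ i, lam i * (x i) ^ 2
        ≤ (1 / (N : ℝ)) * (lam₂ * N + (lam₁ - lam₂) * (x i0) ^ 2) := by rw [← h2]; exact h1
      _ ≤ (1 / (N : ℝ)) * (lam₂ * N + (lam₁ - lam₂) * (ε ^ 2 * N)) := by
          apply mul_le_mul_of_nonneg_left _ (by positivity)
          linarith
      _ = lam₂ + (lam₁ - lam₂) * ε ^ 2 := by field_simp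
  have hinvN : (0 : ℝ) < 1 / N := by positivity
  have hstrict : (1 - 1 / (N : ℝ)) * (1 / β) < 1 / β := by
    have : (0 : ℝ) < 1 / β := by positivity
    nlinarith
  nlinarith [hhle, hstrict, hDmE]
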